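/- Given n rectangles with total area at most W·OPT (where OPT ≥ h_i for all i), any constant ε ∈ (0,1), a positive integer k, and a polynomial-time computable function f : (0,1) → (0,1) with f(x) < x: among the T = 2·(1/ε)^k candidate threshold values δ_1 = ε, δ_{j+1} = f(δ_j), there exists an index j such that the total area of rectangles i whose height h_i lies in (f(δ_j)·OPT, δ_j·OPT) or whose width w_i lies in ((ε·f(δ_j)/12)·W, (ε·δ_j/12)·W) is at most ε^k·OPT·W. -/
import Mathlib


open Finset
open scoped Classical

/-- **Choosing medium thresholds by averaging.**  Given `n` rectangles of total area at most
`W·OPT`, a constant `ε = 1/m ∈ (0,1)`, a positive integer `k`, and a function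
`f : (0,1) → (0,1)` with `f x < x`, define the candidate thresholds by `d 0 = ε` and
`d (j+1) = f (d j)`.  Then among the first `T = 2·(1/ε)^k = 2·m^k` candidates there is an
index `j` such that the total area of rectangles whose height lies in
`(f(d j)·OPT, d j·OPT)` or whose width lies in `((ε·f(d j)/12)·W, (ε·d j/12)·W)` is at most
`ε^k·OPT·W`. -/
theorem medium_threshold_choice {ι : Type*} (s : Finset ι) (w h : ι → ℝ)
    (W OPT ε : ℝ) (k m : ℕ) (hm : 0 < m) (hε : ε = 1 / (m : ℝ)) (hε1 : ε < 1)
    (hk : 0 < k) (hW : 0 < W) (hOPT : 0 < OPT)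
    (f : ℝ → ℝ) (hf : ∀ x : ℝ, 0 < x → x < 1 → 0 < f x ∧ f x < x)
    (hdim : ∀ i ∈ s, 0 < w i ∧ w i ≤ W ∧ 0 < h i ∧ h i ≤ OPT)
    (harea : ∑ i ∈ s, w i * h i ≤ W * OPT)
    (d : ℕ → ℝ) (hd0 : d 0 = ε) (hdS : ∀ j : ℕ, d (j + 1) = f (d j)) :
    ∃ j < 2 * m ^ k,
      ∑ i ∈ s.filter (fun i =>
          (f (d j) * OPT < h i ∧ h i < d j * OPT) ∨
          (ε * f (d j) / 12 * W < w i ∧ w i < ε * d j / 12 * W)), w i * h i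
        ≤ ε ^ k * OPT * W := by
  have hε0 : 0 < ε := by rw [hε]; positivity
  have hdpos : ∀ j, 0 < d j ∧ d j < 1 := by
    intro j
    induction j with
    | zero => rw [hd0]; exact ⟨hε0, hε1⟩
    | succ n ih =>
      rw [hdS]
      obtain ⟨h1, h2⟩ := hf (d n) ih.1 ih.2
      exact ⟨h1, h2.trans ih.2⟩
  have hanti : StrictAnti d := by
    apply strictAnti_nat_of_succ_lt
    intro n
    rw [hdS]
    exact (hf (d n) (hdpos n).1 (hdpos n).2).2
  set T := 2 * m ^ k with hT
  have hT0 : 0 < T := by positivity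
  by_contra hcon
  push_neg at hcon
  set a : ι → ℝ := fun i => w i * h i with ha
  set P : ℕ → ι → Prop := fun j i =>
      (f (d j) * OPT < h i ∧ h i < d j * OPT) ∨
      (ε * f (d j) / 12 * W < w i ∧ w i < ε * d j / 12 * W) with hP
  have uniq : ∀ (x c : ℝ), 0 < c → ∀ j1 j2 : ℕ,
      (f (d j1) * c < x ∧ x < d j1 * c) → (f (d j2) * c < x ∧ x < d j2 * c) → j1 = j2 := by
    have step : ∀ (x c : ℝ), 0 < c → ∀ j1 j2 : ℕ, j1 < j2 →
        (f (d j1) * c < x ∧ x < d j1 * c) → (f (d j2) * c < x ∧ x < d j2 * c) → False := by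
      intro x c hc j1 j2 hlt ⟨h1, _⟩ ⟨_, h4⟩
      have hle : d j2 ≤ d (j1 + 1) := hanti.antitone (Nat.succ_le_of_lt hlt)
      rw [hdS] at hle
      nlinarith
    intro x c hc j1 j2 hc1 hc2
    rcases lt_trichotomy j1 j2 with hlt | heq | hgt
    · exact (step x c hc j1 j2 hlt hc1 hc2).elim
    · exact heq
    · exact (step x c hc j2 j1 hgt hc2 hc1).elim
  have key : ∀ i ∈ s, (((range T).filter fun j => P j i)).card ≤ 2 := by
    intro i hi
    have hsub : ((range T).filter fun j => P j i) ⊆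
        ((range T).filter fun j => f (d j) * OPT < h i ∧ h i < d j * OPT) ∪
        ((range T).filter fun j => ε * f (d j) / 12 * W < w i ∧ w i < ε * d j / 12 * W) := by
      intro j hj
      simp only [mem_filter, mem_union, mem_range, hP] at *
      tauto
    refine (card_le_card hsub).trans ((card_union_le _ _).trans ?_)
    have c1 : (((range T).filter fun j => f (d j) * OPT < h i ∧ h i < d j * OPT)).card ≤ 1 := by
      rw [card_le_one]
      intro j1 hj1 j2 hj2
      simp only [mem_filter] at hj1 hj2
      exact uniq (h i) OPT hOPT j1 j2 hj1.2 hj2.2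
    have c2 : (((range T).filter fun j =>
        ε * f (d j) / 12 * W < w i ∧ w i < ε * d j / 12 * W)).card ≤ 1 := by
      rw [card_le_one]
      intro j1 hj1 j2 hj2
      simp only [mem_filter] at hj1 hj2
      refine uniq (w i) (ε * W / 12) (by positivity) j1 j2 ⟨?_, ?_⟩ ⟨?_, ?_⟩
      · nlinarith [hj1.2.1]
      · nlinarith [hj1.2.2]
      · nlinarith [hj2.2.1]
      · nlinarith [hj2.2.2]
    omega
  have hanonneg : ∀ i ∈ s, 0 ≤ a i := by
    intro i hi
    obtain ⟨h1, _, h3, _⟩ := hdim i hi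
    exact le_of_lt (mul_pos h1 h3)
  have upper : ∑ j ∈ range T, ∑ i ∈ s.filter (P j), a i ≤ 2 * ∑ i ∈ s, a i := by
    calc ∑ j ∈ range T, ∑ i ∈ s.filter (P j), a i
        = ∑ j ∈ range T, ∑ i ∈ s, if P j i then a i else 0 := by
          refine sum_congr rfl fun j _ => ?_
          rw [sum_filter]
      _ = ∑ i ∈ s, ∑ j ∈ range T, if P j i then a i else 0 := sum_comm
      _ ≤ ∑ i ∈ s, 2 * a i := by
          refine sum_le_sum fun i hi => ?_
          rw [← sum_filter, sum_const, nsmul_eq_mul]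
          have := key i hi
          have hcast : ((((range T).filter fun j => P j i)).card : ℝ) ≤ 2 := by
            exact_mod_cast this
          exact mul_le_mul_of_nonneg_right hcast (hanonneg i hi)
      _ = 2 * ∑ i ∈ s, a i := (mul_sum _ _ _).symm
  have lower : (T : ℝ) * (ε ^ k * OPT * W) < ∑ j ∈ range T, ∑ i ∈ s.filter (P j), a i := by
    calc (T : ℝ) * (ε ^ k * OPT * W) = ∑ _j ∈ range T, ε ^ k * OPT * W := by
          rw [sum_const, card_range, nsmul_eq_mul]
      _ < ∑ j ∈ range T, ∑ i ∈ s.filter (P j), a i := by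
          refine sum_lt_sum_of_nonempty ⟨0, mem_range.2 hT0⟩ fun j hj => ?_
          exact hcon j (mem_range.1 hj)
  have hTε : (T : ℝ) * ε ^ k = 2 := by
    rw [hT, hε]
    push_cast
    rw [one_div, inv_pow, mul_assoc, mul_inv_cancel₀ (by positivity), mul_one]
  have h2 : (T : ℝ) * (ε ^ k * OPT * W) = 2 * (OPT * W) := by
    rw [← mul_assoc, ← mul_assoc, hTε, mul_assoc]
  have h3 : 2 * ∑ i ∈ s, a i ≤ 2 * (W * OPT) := by linarith [harea]
  rw [h2] at lower
  nlinarith [lower, upper, h3]
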